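/- For all natural numbers d and i with i < d, there exists a polynomial F ∈ ℝ[x] of degree d having d distinct real roots (i.e. F splits over ℝ and its root set has cardinality d) such that the coefficient of x^i in F is zero. -/

import Mathlib

open Polynomial

/-- Iterated derivatives of a real polynomial lose at most one root each time. -/
lemma card_roots_iterate_derivative (p : Polynomial ℝ) (k : ℕ) :
    Multiset.card p.roots - k ≤ Multiset.card ((Polynomial.derivative^[k]) p).roots := by
  induction k with
  | zero => simp
  | succ n ih =>
      rw [Function.iterate_succ_apply']
      have h := Polynomial.card_roots_le_derivative ((Polynomial.derivative^[n]) p)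
      omega

/-- For every `i < d` there is a real polynomial `F` of degree `d` having `d`
distinct real roots (it splits over `ℝ` and its root set has cardinality `d`)
whose coefficient of `x^i` vanishes. -/
theorem exists_poly_all_real_roots_with_zero_coeff (d i : ℕ) (hi : i < d) :
    ∃ F : Polynomial ℝ, F.natDegree = d ∧
      F.Splits ∧
      F.roots.toFinset.card = d ∧
      F.coeff i = 0 := by
  -- the base polynomial with roots 0, 1, ..., d-1
  set m : Multiset ℝ := (Finset.range d).val.map (Nat.cast : ℕ → ℝ) with hm
  set G : Polynomial ℝ := (m.map fun a => X - C a).prod with hG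
  have hrootsG : G.roots = m := Polynomial.roots_multiset_prod_X_sub_C m
  have hcardm : Multiset.card m = d := by simp [hm]
  -- the i-th iterated derivative of G has a real root s
  have hcard : 1 ≤ Multiset.card ((Polynomial.derivative^[i]) G).roots := by
    have := card_roots_iterate_derivative G i
    rw [hrootsG, hcardm] at this
    omega
  obtain ⟨s, hs⟩ := Multiset.card_pos_iff_exists_mem.mp
    (show 0 < Multiset.card ((Polynomial.derivative^[i]) G).roots by omega)
  have hne : (Polynomial.derivative^[i]) G ≠ 0 := by
    intro h
    rw [h] at hcard
    simp at hcard
  have hseval : ((Polynomial.derivative^[i]) G).eval s = 0 :=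
    (Polynomial.mem_roots hne).mp hs
  -- the polynomial F
  set m' : Multiset ℝ := m.map (fun a => a - s) with hm'
  have hcardm' : Multiset.card m' = d := by simp [hm', hcardm]
  have hroots : ((m'.map fun a => X - C a).prod).roots = m' :=
    Polynomial.roots_multiset_prod_X_sub_C m'
  have hdeg : ((m'.map fun a => X - C a).prod).natDegree = d := by
    rw [Polynomial.natDegree_multiset_prod_X_sub_C_eq_card, hcardm']
  refine ⟨(m'.map fun a => X - C a).prod, hdeg, ?_, ?_, ?_⟩
  · rw [Polynomial.splits_iff_card_roots, hroots, hcardm', hdeg]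
  · rw [hroots]
    have hnodup : m'.Nodup := by
      rw [hm', hm, Multiset.map_map]
      refine Multiset.Nodup.map ?_ (Finset.range d).nodup
      intro a b hab
      simp only [Function.comp_apply] at hab
      have : (a : ℝ) = b := by linarith
      exact_mod_cast this
    rw [Multiset.toFinset_card_of_nodup hnodup, hcardm']
  · -- F = taylor s G, so its i-th coefficient is (hasseDeriv i G).eval s = 0
    have hF : (m'.map fun a => X - C a).prod = Polynomial.taylor s G := by
      rw [Polynomial.taylor_apply, hG, Polynomial.multiset_prod_comp, hm', hm,
        Multiset.map_map, Multiset.map_map, Multiset.map_map, Multiset.map_map]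
      congr 1
      refine Multiset.map_congr rfl ?_
      intro a _
      simp only [Function.comp_apply, Polynomial.sub_comp, Polynomial.X_comp,
        Polynomial.C_comp, Polynomial.C_sub]
      ring
    rw [hF, Polynomial.taylor_coeff]
    have h1 : (Nat.factorial i • Polynomial.hasseDeriv (R := ℝ) i) G
        = (Polynomial.derivative^[i]) G :=
      congrFun (Polynomial.factorial_smul_hasseDeriv (R := ℝ) i) G
    rw [LinearMap.smul_apply] at h1
    have h2 := congrArg (Polynomial.eval s) h1
    rw [hseval, nsmul_eq_mul, Polynomial.eval_mul] at h2
    have hfactne : ((Nat.factorial i : ℝ)) ≠ 0 := by positivity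
    have h3 : Polynomial.eval s ((Nat.factorial i : ℝ[X])) = (Nat.factorial i : ℝ) := by simp
    rw [h3] at h2
    exact (mul_eq_zero.mp h2).resolve_left hfactne
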